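/- Let f : ℝ → ℝ be upper semicontinuous. If f is not quasiconvex, then there exist points p ≤ q such that f(p) = f(q), f attains a local maximum at both p and q, the local maximum at p is strict from the left (there exists x₀ < p with f(x) < f(p) for all x ∈ (x₀, p)), and the local maximum at q is strict from the right (there exists y₀ > q with f(y) < f(q) for all y ∈ (q, y₀)). -/

import Mathlib

open Set

/-- An upper semicontinuous function attains its maximum on a closed interval. -/
lemma usc_exists_max (f : ℝ → ℝ) (hf : UpperSemicontinuous f) {a b : ℝ} (hab : a ≤ b) :
    ∃ m ∈ Icc a b, ∀ t ∈ Icc a b, f t ≤ f m := by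
  have hne : (Icc a b).Nonempty := ⟨a, le_refl a, hab⟩
  have hco : IsCompact (Icc a b) := isCompact_Icc
  set S : (Icc a b) → Set ℝ := fun t => Icc a b ∩ f ⁻¹' Ici (f t) with hS
  have hcl : ∀ t, IsClosed (S t) := fun t =>
    isClosed_Icc.inter (hf.isClosed_preimage (f t))
  have hSsub : ∀ t, S t ⊆ Icc a b := fun t => inter_subset_left
  have hdir : Directed (· ⊇ ·) S := by
    intro t t'
    rcases le_total (f t) (f t') with h | h
    · exact ⟨t', fun u hu => ⟨hu.1, le_trans h hu.2⟩, fun u hu => hu⟩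
    · exact ⟨t, fun u hu => hu, fun u hu => ⟨hu.1, le_trans h hu.2⟩⟩
  have : Nonempty (Icc a b) := ⟨⟨a, le_refl a, hab⟩⟩
  obtain ⟨m, hm⟩ := IsCompact.nonempty_iInter_of_directed_nonempty_isCompact_isClosed S hdir
    (fun t => ⟨t.1, t.2, Set.mem_preimage.2 self_mem_Ici⟩)
    (fun t => hco.of_isClosed_subset (hcl t) (hSsub t)) hcl
  simp only [mem_iInter] at hm
  refine ⟨m, (hm ⟨a, le_refl a, hab⟩).1, fun t ht => (hm ⟨t, ht⟩).2⟩

theorem stmt_6 (f : ℝ → ℝ) (hf : UpperSemicontinuous f)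
    (h : ¬ ∀ x y z : ℝ, x ≤ z → z ≤ y → f z ≤ max (f x) (f y)) :
    ∃ p q : ℝ, p ≤ q ∧ f p = f q ∧
      IsLocalMax f p ∧ IsLocalMax f q ∧
      (∃ x₀ < p, ∀ x ∈ Set.Ioo x₀ p, f x < f p) ∧
      (∃ y₀ > q, ∀ y ∈ Set.Ioo q y₀, f y < f q) := by
  push_neg at h
  obtain ⟨a, b, z, haz, hzb, hz⟩ := h
  have hab : a ≤ b := le_trans haz hzb
  obtain ⟨m, hmab, hmax⟩ := usc_exists_max f hf hab
  -- the argmax set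
  set S : Set ℝ := Icc a b ∩ f ⁻¹' Ici (f m) with hSdef
  have hScl : IsClosed S := isClosed_Icc.inter (hf.isClosed_preimage (f m))
  have hSne : S.Nonempty := ⟨m, hmab, Set.mem_preimage.2 self_mem_Ici⟩
  have hSbdd : BddBelow S := (bddBelow_Icc (a := b) (b := a)).mono inter_subset_left
  have hSbdd' : BddAbove S := (bddAbove_Icc (a := a) (b := b)).mono inter_subset_left
  set p := sInf S with hp
  set q := sSup S with hq
  have hpS : p ∈ S := hScl.csInf_mem hSne hSbdd
  have hqS : q ∈ S := hScl.csSup_mem hSne hSbdd'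
  have hpq : p ≤ q := csInf_le_csSup hSne hSbdd hSbdd'
  have hfm_lt : max (f a) (f b) < f m := lt_of_lt_of_le hz (hmax z ⟨haz, hzb⟩)
  have hfa : f a < f m := lt_of_le_of_lt (le_max_left _ _) hfm_lt
  have hfb : f b < f m := lt_of_le_of_lt (le_max_right _ _) hfm_lt
  have hfp : f p = f m := le_antisymm (hmax p hpS.1) hpS.2
  have hfq : f q = f m := le_antisymm (hmax q hqS.1) hqS.2
  have hap : a < p := lt_of_le_of_ne hpS.1.1 (fun he => by rw [he, hfp] at hfa; exact lt_irrefl _ hfa)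
  have hqb : q < b := lt_of_le_of_ne hqS.1.2 (fun he => by rw [← he, hfq] at hfb; exact lt_irrefl _ hfb)
  have hmemS : ∀ t ∈ Icc a b, f m ≤ f t → t ∈ S := fun t ht h' => ⟨ht, h'⟩
  have hIccnhds : ∀ r ∈ Ioo a b, Icc a b ∈ nhds r := fun r hr =>
    Filter.mem_of_superset (Ioo_mem_nhds hr.1 hr.2) Ioo_subset_Icc_self
  have hlmp : IsLocalMax f p := by
    filter_upwards [hIccnhds p ⟨hap, lt_of_le_of_lt hpq hqb⟩] with t ht
    rw [hfp]; exact hmax t ht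
  have hlmq : IsLocalMax f q := by
    filter_upwards [hIccnhds q ⟨lt_of_lt_of_le hap hpq, hqb⟩] with t ht
    rw [hfq]; exact hmax t ht
  refine ⟨p, q, hpq, hfp.trans hfq.symm, hlmp, hlmq, ⟨a, hap, ?_⟩, ⟨b, hqb, ?_⟩⟩
  · intro x hx
    rw [hfp]
    refine lt_of_le_of_ne (hmax x ⟨le_of_lt hx.1, le_trans (le_of_lt hx.2) hpS.1.2⟩) ?_
    intro heq
    have : x ∈ S := ⟨⟨le_of_lt hx.1, le_trans (le_of_lt hx.2) hpS.1.2⟩, le_of_eq heq.symm⟩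
    exact absurd (csInf_le hSbdd this) (not_le.2 hx.2)
  · intro y hy
    rw [hfq]
    refine lt_of_le_of_ne (hmax y ⟨le_trans hqS.1.1 (le_of_lt hy.1), le_of_lt hy.2⟩) ?_
    intro heq
    have : y ∈ S := ⟨⟨le_trans hqS.1.1 (le_of_lt hy.1), le_of_lt hy.2⟩, le_of_eq heq.symm⟩
    exact absurd (le_csSup hSbdd' this) (not_le.2 hy.1)
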